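/- For any T ≥ 1 and N ≥ T there exist distinct positive integers α₁, ..., α_T such that the N×(N-T) matrix A, whose first N-T rows form the identity matrix and whose row N-T+t (for t = 1,...,T) is (α_t, α_t², ..., α_t^{N-T}), has the property that every (N-T)×(N-T) submatrix of A is nonsingular. -/

import Mathlib

open Finset

private lemma aux_sum_two_pow_ne_zero {ι : Type*} [DecidableEq ι] (S : Finset ι)
    (hS : S.Nonempty) (f : ι → ℕ)
    (hf : ∀ a ∈ S, ∀ b ∈ S, f a = f b → a = b)
    (ε : ι → ℤ) (hε : ∀ a ∈ S, ε a = 1 ∨ ε a = -1) :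
    (∑ a ∈ S, ε a * 2 ^ f a) ≠ 0 := by
  obtain ⟨a₀, ha₀, hmin⟩ := S.exists_min_image f hS
  intro h0
  have hsplit : ε a₀ * 2 ^ f a₀ + ∑ a ∈ S.erase a₀, ε a * 2 ^ f a = 0 := by
    rw [Finset.add_sum_erase S (fun a => ε a * 2 ^ f a) ha₀]; exact h0
  have hdvd : (2 : ℤ) ^ (f a₀ + 1) ∣ ∑ a ∈ S.erase a₀, ε a * 2 ^ f a := by
    refine Finset.dvd_sum fun a ha => ?_
    have haS := Finset.mem_of_mem_erase ha
    have hne : a ≠ a₀ := Finset.ne_of_mem_erase ha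
    have h1 : f a₀ + 1 ≤ f a :=
      Nat.succ_le_of_lt (lt_of_le_of_ne (hmin a haS) fun h => hne (hf a haS a₀ ha₀ h.symm))
    exact Dvd.dvd.mul_left (pow_dvd_pow 2 h1) _
  have hdvd2 : (2 : ℤ) ^ (f a₀ + 1) ∣ ε a₀ * 2 ^ f a₀ := by
    have heq : ε a₀ * 2 ^ f a₀ = -∑ a ∈ S.erase a₀, ε a * 2 ^ f a := by linarith
    rw [heq]; exact dvd_neg.mpr hdvd
  have h2 : (2 : ℤ) ∣ ε a₀ := by
    rcases hdvd2 with ⟨c, hc⟩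
    have hc' : (2 : ℤ) ^ f a₀ * ε a₀ = 2 ^ f a₀ * (2 * c) := by
      rw [mul_comm ((2 : ℤ) ^ f a₀) (ε a₀), hc, pow_succ]; ring
    exact ⟨c, mul_left_cancel₀ (by positivity) hc'⟩
  rcases hε a₀ ha₀ with h | h <;> rw [h] at h2 <;> omega

private lemma aux_digit_sum_lt (K n : ℕ) (D : ℕ → ℕ) (hD : ∀ t, t < n → D t < K) :
    ∑ t ∈ Finset.range n, K ^ t * D t < K ^ n := by
  induction n with
  | zero => simp
  | succ n ih =>
    have hK : 1 ≤ K := by have := hD n (Nat.lt_succ_self n); omega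
    have h1 : ∑ t ∈ Finset.range n, K ^ t * D t < K ^ n := ih fun t ht => hD t (by omega)
    have h2 : K ^ n * D n ≤ K ^ n * (K - 1) :=
      Nat.mul_le_mul_left _ (by have := hD n (Nat.lt_succ_self n); omega)
    have hK1 : K - 1 + 1 = K := by omega
    rw [Finset.sum_range_succ]
    calc ∑ t ∈ Finset.range n, K ^ t * D t + K ^ n * D n
        < K ^ n + K ^ n * (K - 1) := by omega
      _ = K ^ n * (K - 1) + K ^ n := by omega
      _ = K ^ n * (K - 1 + 1) := (Nat.mul_succ _ _).symm
      _ = K ^ n * K := by rw [hK1]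
      _ = K ^ (n + 1) := (pow_succ K n).symm

private lemma aux_digits_unique (K : ℕ) : ∀ (n : ℕ) (D D' : ℕ → ℕ),
    (∀ t, t < n → D t < K) → (∀ t, t < n → D' t < K) →
    (∑ t ∈ Finset.range n, K ^ t * D t = ∑ t ∈ Finset.range n, K ^ t * D' t) →
    ∀ t, t < n → D t = D' t := by
  intro n
  induction n with
  | zero => intro D D' _ _ _ t ht; omega
  | succ n ih =>
    intro D D' hD hD' hsum t ht
    have hK : 1 ≤ K := by have := hD n (Nat.lt_succ_self n); omega
    have hKn : 0 < K ^ n := Nat.pow_pos hK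
    have hs : ∑ t ∈ Finset.range n, K ^ t * D t < K ^ n :=
      aux_digit_sum_lt K n D fun t ht => hD t (by omega)
    have hs' : ∑ t ∈ Finset.range n, K ^ t * D' t < K ^ n :=
      aux_digit_sum_lt K n D' fun t ht => hD' t (by omega)
    rw [Finset.sum_range_succ, Finset.sum_range_succ] at hsum
    have e1 : (∑ t ∈ Finset.range n, K ^ t * D t + K ^ n * D n) / K ^ n = D n := by
      rw [Nat.add_mul_div_left _ _ hKn, Nat.div_eq_of_lt hs, Nat.zero_add]
    have e2 : (∑ t ∈ Finset.range n, K ^ t * D' t + K ^ n * D' n) / K ^ n = D' n := by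
      rw [Nat.add_mul_div_left _ _ hKn, Nat.div_eq_of_lt hs', Nat.zero_add]
    have htop : D n = D' n := by rw [← e1, ← e2, hsum]
    have hlow : ∑ t ∈ Finset.range n, K ^ t * D t = ∑ t ∈ Finset.range n, K ^ t * D' t := by
      rw [htop] at hsum; omega
    rcases Nat.lt_succ_iff_lt_or_eq.mp ht with h | h
    · exact ih D D' (fun t ht => hD t (by omega)) (fun t ht => hD' t (by omega)) hlow t h
    · rw [h]; exact htop

/-- For T ≥ 1 and N ≥ T there exist distinct positive integers
α₁,...,α_T such that the N×(N-T) matrix whose top (N-T)×(N-T) block is the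
identity and whose row N-T+t is (α_t, α_t², ..., α_t^{N-T}) has every
(N-T)×(N-T) submatrix nonsingular. -/
theorem stmt_5 (N T : ℕ) (hT : 1 ≤ T) (hTN : T ≤ N) :
    ∃ α : Fin T → ℕ, Function.Injective α ∧ (∀ t, 0 < α t) ∧
      ∀ e : Fin (N - T) → Fin N, Function.Injective e →
        (Matrix.of fun i j : Fin (N - T) =>
          (fun (r : Fin N) (c : Fin (N - T)) =>
            if h : (r : ℕ) < N - T then (if (r : ℕ) = (c : ℕ) then (1 : ℚ) else 0)
            else ((α ⟨(r : ℕ) - (N - T), by have := r.isLt; omega⟩ : ℚ)) ^ ((c : ℕ) + 1))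
          (e i) j).det ≠ 0 := by
  classical
  set K := N + 1 with hK
  set α : Fin T → ℕ := fun t => 2 ^ K ^ (t : ℕ) with hα
  refine ⟨α, ?_, ?_, ?_⟩
  · intro a b hab
    simp only [hα] at hab
    have h1 := Nat.pow_right_injective (le_refl 2) hab
    have h2 := Nat.pow_right_injective (by omega : 2 ≤ K) h1
    exact Fin.ext h2
  · intro t; simp only [hα]; positivity
  · set k := N - T with hk
    intro e he
    set Mz : Matrix (Fin k) (Fin k) ℤ := Matrix.of fun i j =>
      if (e i : ℕ) < k then (if (e i : ℕ) = (j : ℕ) then 1 else 0)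
      else (2 : ℤ) ^ (K ^ ((e i : ℕ) - k) * ((j : ℕ) + 1)) with hMzdef
    have hMz : Mz.det ≠ 0 := by
      set cond : Equiv.Perm (Fin k) → Prop :=
        fun σ => ∀ i, (e (σ i) : ℕ) < k → (e (σ i) : ℕ) = (i : ℕ) with hcond
      set g : Equiv.Perm (Fin k) → ℕ :=
        fun σ => ∑ i : Fin k,
          if (e (σ i) : ℕ) < k then 0 else K ^ ((e (σ i) : ℕ) - k) * ((i : ℕ) + 1) with hg
      set D : Equiv.Perm (Fin k) → ℕ → ℕ :=
        fun σ t => ∑ i : Fin k, if (e (σ i) : ℕ) = k + t then (i : ℕ) + 1 else 0 with hD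
      have hprod1 : ∀ σ : Equiv.Perm (Fin k), cond σ →
          ∏ i : Fin k, Mz (σ i) i = 2 ^ g σ := by
        intro σ hσ
        simp only [hg]
        rw [← Finset.prod_pow_eq_pow_sum]
        refine Finset.prod_congr rfl fun i _ => ?_
        by_cases h : (e (σ i) : ℕ) < k
        · simp only [hMzdef, Matrix.of_apply, if_pos h, if_pos (hσ i h), pow_zero]
        · simp only [hMzdef, Matrix.of_apply, if_neg h]
      have hprod0 : ∀ σ : Equiv.Perm (Fin k), ¬ cond σ →
          ∏ i : Fin k, Mz (σ i) i = 0 := by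
        intro σ hσ
        simp only [hcond] at hσ
        push_neg at hσ
        obtain ⟨i, h1, h2⟩ := hσ
        refine Finset.prod_eq_zero (Finset.mem_univ i) ?_
        simp only [hMzdef, Matrix.of_apply, if_pos h1, if_neg h2]
      have hsum : Mz.det = ∑ σ ∈ Finset.univ.filter (fun σ => cond σ),
          ((Equiv.Perm.sign σ : ℤˣ) : ℤ) * 2 ^ g σ := by
        rw [Matrix.det_apply']
        simp only [Int.cast_id]
        rw [← Finset.sum_filter_add_sum_filter_not Finset.univ (fun σ => cond σ)]
        have h0 : ∑ σ ∈ Finset.univ.filter (fun σ => ¬ cond σ),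
            ((Equiv.Perm.sign σ : ℤˣ) : ℤ) * ∏ i, Mz (σ i) i = 0 :=
          Finset.sum_eq_zero fun σ hσ => by
            rw [hprod0 σ (Finset.mem_filter.mp hσ).2, mul_zero]
        rw [h0, add_zero]
        exact Finset.sum_congr rfl fun σ hσ => by
          rw [hprod1 σ (Finset.mem_filter.mp hσ).2]
      -- nonemptiness
      have hne : (Finset.univ.filter (fun σ => cond σ)).Nonempty := by
        have hbij : Function.Bijective (fun j : {j : Fin k // (e j : ℕ) < k} =>
            (⟨⟨(e j.1 : ℕ), j.2⟩, ⟨j.1, j.2, rfl⟩⟩ :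
              {i : Fin k // ∃ j : Fin k, (e j : ℕ) < k ∧ (e j : ℕ) = (i : ℕ)})) := by
          constructor
          · intro a b hab
            have h1 : (e a.1 : ℕ) = (e b.1 : ℕ) := by
              simpa [Subtype.ext_iff, Fin.ext_iff] using hab
            exact Subtype.ext (he (Fin.ext h1))
          · rintro ⟨i, j, hj1, hj2⟩
            exact ⟨⟨j, hj1⟩, by simp [Subtype.ext_iff, Fin.ext_iff, hj2]⟩
        set φ := Equiv.ofBijective _ hbij with hφ
        refine ⟨(φ.extendSubtype)⁻¹, ?_⟩
        rw [Finset.mem_filter]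
        refine ⟨Finset.mem_univ _, fun i hi => ?_⟩
        have hp : (e ((φ.extendSubtype)⁻¹ i) : ℕ) < k := hi
        have hmem := Equiv.extendSubtype_apply_of_mem φ ((φ.extendSubtype)⁻¹ i) hp
        rw [show φ.extendSubtype ((φ.extendSubtype)⁻¹ i) = i from Equiv.apply_symm_apply _ _] at hmem
        have hval := congrArg Fin.val hmem
        simpa [hφ] using hval.symm
      -- g expressed in digits
      have hgD : ∀ σ : Equiv.Perm (Fin k), g σ = ∑ t ∈ Finset.range T, K ^ t * D σ t := by
        intro σ
        have hper : ∀ i : Fin k,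
            (∑ t ∈ Finset.range T, if (e (σ i) : ℕ) = k + t then K ^ t * ((i : ℕ) + 1) else 0)
            = (if (e (σ i) : ℕ) < k then 0 else K ^ ((e (σ i) : ℕ) - k) * ((i : ℕ) + 1)) := by
          intro i
          by_cases h : (e (σ i) : ℕ) < k
          · rw [if_pos h]
            exact Finset.sum_eq_zero fun t _ => if_neg (by omega)
          · rw [if_neg h]
            have hlt : (e (σ i) : ℕ) - k < T := by have := (e (σ i)).isLt; omega
            rw [Finset.sum_eq_single ((e (σ i) : ℕ) - k)]
            · rw [if_pos (by omega)]
            · intro t ht hnet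
              exact if_neg (by rw [Finset.mem_range] at ht; omega)
            · intro habs; exact absurd (Finset.mem_range.mpr hlt) habs
        calc g σ = ∑ i : Fin k,
              ∑ t ∈ Finset.range T, (if (e (σ i) : ℕ) = k + t then K ^ t * ((i : ℕ) + 1) else 0) := by
              simp only [hg]
              exact Finset.sum_congr rfl fun i _ => (hper i).symm
          _ = ∑ t ∈ Finset.range T,
              ∑ i : Fin k, (if (e (σ i) : ℕ) = k + t then K ^ t * ((i : ℕ) + 1) else 0) :=
              Finset.sum_comm
          _ = ∑ t ∈ Finset.range T, K ^ t * D σ t := by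
              refine Finset.sum_congr rfl fun t _ => ?_
              simp only [hD]
              rw [Finset.mul_sum]
              refine Finset.sum_congr rfl fun i _ => ?_
              split_ifs <;> ring
      have hDmem : ∀ (σ : Equiv.Perm (Fin k)) (j : Fin k), k ≤ (e j : ℕ) →
          D σ ((e j : ℕ) - k) = (σ.symm j : ℕ) + 1 := by
        intro σ j hj
        have hiff : ∀ i : Fin k,
            ((e (σ i) : ℕ) = k + ((e j : ℕ) - k)) ↔ i = σ.symm j := by
          intro i
          constructor
          · intro h
            have hv : (e (σ i) : ℕ) = (e j : ℕ) := by omega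
            have hij : σ i = j := he (Fin.ext hv)
            exact (Equiv.eq_symm_apply σ).mpr hij
          · rintro rfl
            rw [Equiv.apply_symm_apply]
            omega
        simp only [hD]
        calc (∑ i : Fin k, if (e (σ i) : ℕ) = k + ((e j : ℕ) - k) then (i : ℕ) + 1 else 0)
            = ∑ i : Fin k, if i = σ.symm j then (i : ℕ) + 1 else 0 :=
              Finset.sum_congr rfl fun i _ => if_congr (hiff i) rfl rfl
          _ = (σ.symm j : ℕ) + 1 := by
              rw [Finset.sum_ite_eq']
              exact if_pos (Finset.mem_univ _)
      have hDnot : ∀ (σ : Equiv.Perm (Fin k)) (t : ℕ), (∀ j : Fin k, (e j : ℕ) ≠ k + t) →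
          D σ t = 0 := by
        intro σ t h
        simp only [hD]
        exact Finset.sum_eq_zero fun i _ => if_neg (h (σ i))
      have hDlt : ∀ (σ : Equiv.Perm (Fin k)) (t : ℕ), D σ t < K := by
        intro σ t
        by_cases hex : ∃ j : Fin k, (e j : ℕ) = k + t
        · obtain ⟨j, hj⟩ := hex
          have h1 : k ≤ (e j : ℕ) := by omega
          have h2 : (e j : ℕ) - k = t := by omega
          rw [← h2, hDmem σ j h1]
          have := (σ.symm j).isLt
          omega
        · push_neg at hex
          rw [hDnot σ t hex]
          omega
      have hginj : ∀ σ ∈ Finset.univ.filter (fun σ => cond σ),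
          ∀ τ ∈ Finset.univ.filter (fun σ => cond σ), g σ = g τ → σ = τ := by
        intro σ hσ τ hτ hgeq
        rw [Finset.mem_filter] at hσ hτ
        have hσ2 : ∀ i, (e (σ i) : ℕ) < k → (e (σ i) : ℕ) = (i : ℕ) := hσ.2
        have hτ2 : ∀ i, (e (τ i) : ℕ) < k → (e (τ i) : ℕ) = (i : ℕ) := hτ.2
        have hdig : ∀ t, t < T → D σ t = D τ t := by
          refine aux_digits_unique K T (D σ) (D τ) (fun t _ => hDlt σ t) (fun t _ => hDlt τ t) ?_
          rw [← hgD σ, ← hgD τ, hgeq]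
        have hsymm : σ.symm = τ.symm := by
          ext j
          by_cases hj : (e j : ℕ) < k
          · have h1 : (e (σ (σ.symm j)) : ℕ) < k := by rw [Equiv.apply_symm_apply]; exact hj
            have h2 := hσ2 (σ.symm j) h1
            rw [Equiv.apply_symm_apply] at h2
            have h3 : (e (τ (τ.symm j)) : ℕ) < k := by rw [Equiv.apply_symm_apply]; exact hj
            have h4 := hτ2 (τ.symm j) h3
            rw [Equiv.apply_symm_apply] at h4
            omega
          · have h1 : k ≤ (e j : ℕ) := le_of_not_gt hj
            have ht : (e j : ℕ) - k < T := by have := (e j).isLt; omega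
            have h5 := hdig _ ht
            rw [hDmem σ j h1, hDmem τ j h1] at h5
            omega
        have h6 := congrArg Equiv.symm hsymm
        simpa using h6
      rw [hsum]
      refine aux_sum_two_pow_ne_zero _ hne g hginj _ ?_
      intro σ _
      rcases Int.units_eq_one_or (Equiv.Perm.sign σ) with h | h <;> rw [h] <;> simp
    have hmap : (Matrix.of fun i j : Fin k =>
          (fun (r : Fin N) (c : Fin k) =>
            if h : (r : ℕ) < k then (if (r : ℕ) = (c : ℕ) then (1 : ℚ) else 0)
            else ((α ⟨(r : ℕ) - k, by have := r.isLt; omega⟩ : ℚ)) ^ ((c : ℕ) + 1))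
          (e i) j) = (Int.castRingHom ℚ).mapMatrix Mz := by
      ext i j
      simp only [RingHom.mapMatrix_apply, Matrix.map_apply, Matrix.of_apply, hMzdef, hα]
      split_ifs with h1 h2 <;> simp only [eq_intCast] <;> push_cast <;> norm_num [pow_mul]
    rw [hmap, ← RingHom.map_det]
    simp only [eq_intCast, ne_eq, Int.cast_eq_zero]
    exact hMz
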